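/- Let k be a field and H a Hopf algebra over k whose antipode S is bijective. Let t ∈ H be a right integral (t·h = ε(h)·t for all h ∈ H), and let α : H → k be a left integral of the dual (∑ h₁·α(h₂) = α(h)·1_H for all h ∈ H) with α(t) = 1. Then for every h ∈ H, ∑ S(t₁)·α(t₂·h) = h; more precisely, applying to Δ(t) the linear map H ⊗ H → H induced by the bilinear map (a, b) ↦ α(b·h) • S(a) yields exactly h. -/

import Mathlib

open TensorProduct HopfAlgebra Coalgebra

/-- **The identity `h = ∑ S(t₁) · α(t₂ · h)`.** Let `H` be a Hopf algebra over a field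
`k` with bijective antipode `S`, `t ∈ H` a right integral (`t * h = ε(h) • t`), and
`α : H → k` a left integral of the dual (`∑ h₁ · α(h₂) = α(h) • 1`) with `α t = 1`.
Then for every `h ∈ H`, applying to `Δ t` the linear map `H ⊗ H → H` induced by the
bilinear map `(a, b) ↦ α (b * h) • S a` yields `h`; concretely,
`rid ((lTensor α) ((S ⊗ (·* h)) (Δ t))) = h`. -/
theorem stmt11 {k H : Type*} [Field k] [Ring H] [HopfAlgebra k H]
    (hS : Function.Bijective (antipode (R := k) (A := H)))
    (t : H) (ht : ∀ h : H, t * h = counit (R := k) h • t)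
    (α : H →ₗ[k] k)
    (hα : ∀ h : H,
      TensorProduct.rid k H ((LinearMap.lTensor H α) (comul (R := k) h)) = α h • (1 : H))
    (hαt : α t = 1) :
    ∀ h : H,
      TensorProduct.rid k H ((LinearMap.lTensor H α)
        ((TensorProduct.map (antipode (R := k)) (LinearMap.mulRight k h))
          (comul (R := k) t))) = h := by
  classical
  have P1 : ∀ x : H, comul (R := k) t * comul (R := k) x
      = counit (R := k) x • comul (R := k) t := by
    intro x
    rw [← Bialgebra.comul_mul, ht, map_smul]
  have E1 : ∀ (u : H ⊗[k] H) (c : H),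
      u * ((1 : H) ⊗ₜ[k] c) = LinearMap.lTensor H (LinearMap.mulRight k c) u := by
    intro u c
    induction u using TensorProduct.induction_on with
    | zero => simp
    | tmul x y => simp [Algebra.TensorProduct.tmul_mul_tmul]
    | add x y hx hy => simp [add_mul, hx, hy]
  have E2 : ∀ (u : H ⊗[k] H) (c : H),
      u * (c ⊗ₜ[k] (1 : H)) = LinearMap.rTensor H (LinearMap.mulRight k c) u := by
    intro u c
    induction u using TensorProduct.induction_on with
    | zero => simp
    | tmul x y => simp [Algebra.TensorProduct.tmul_mul_tmul]
    | add x y hx hy => simp [add_mul, hx, hy]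
  -- The key identity: `Δt · (g ⊗ 1) = Δt · (1 ⊗ S g)` for every `g`.
  have C : ∀ g : H, comul (R := k) t * (g ⊗ₜ[k] (1 : H))
      = comul (R := k) t * ((1 : H) ⊗ₜ[k] antipode (R := k) g) := by
    intro g
    set rg := Coalgebra.Repr.arbitrary k g with hrg
    set a₁ : (i : H × H) → Coalgebra.Repr k (rg.left i) (H × H) :=
      fun i => Coalgebra.Repr.arbitrary k _ with ha₁
    set a₂ : (i : H × H) → Coalgebra.Repr k (rg.right i) (H × H) :=
      fun i => Coalgebra.Repr.arbitrary k _ with ha₂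
    -- the auxiliary linear map `F (a ⊗ (b ⊗ c)) = (Δt * (a ⊗ b)) * (1 ⊗ S c)`
    set F : H ⊗[k] (H ⊗[k] H) →ₗ[k] H ⊗[k] H :=
      (LinearMap.mul' k (H ⊗[k] H)) ∘ₗ
        (TensorProduct.map (LinearMap.mulLeft k (comul (R := k) t))
          ((TensorProduct.mk k H H 1) ∘ₗ (antipode (R := k)))) ∘ₗ
        (TensorProduct.assoc k H H H).symm.toLinearMap with hF
    have hFapp : ∀ a b c : H,
        F (a ⊗ₜ[k] (b ⊗ₜ[k] c))
          = (comul (R := k) t * (a ⊗ₜ[k] b)) * ((1 : H) ⊗ₜ[k] antipode (R := k) c) := by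
      intro a b c
      simp [hF, TensorProduct.assoc_symm_tmul, TensorProduct.map_tmul,
        LinearMap.mul'_apply, LinearMap.mulLeft_apply]
    -- counit identities from the chosen representation
    have hcounitR : g ⊗ₜ[k] (1 : H)
        = ∑ i ∈ rg.index, rg.left i ⊗ₜ[k] (counit (R := k) (rg.right i) • (1 : H)) := by
      have h0 := Coalgebra.sum_tmul_counit_eq (R := k) rg
      apply_fun LinearMap.lTensor H (Algebra.linearMap k H) at h0
      rw [map_sum] at h0
      simp only [LinearMap.lTensor_tmul, Algebra.linearMap_apply,
        Algebra.algebraMap_eq_smul_one, one_smul] at h0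
      exact h0.symm
    have hcounitL : ∑ i ∈ rg.index, counit (R := k) (rg.left i) • rg.right i = g := by
      have h0 := Coalgebra.sum_counit_tmul_eq (R := k) rg
      apply_fun TensorProduct.lid k H at h0
      rw [map_sum] at h0
      simp only [TensorProduct.lid_tmul, one_smul] at h0
      exact h0
    -- evaluate `F` on `left i ⊗ Δ(right i)`
    have hFright : ∀ i ∈ rg.index,
        F (rg.left i ⊗ₜ[k] comul (R := k) (rg.right i))
          = comul (R := k) t * (rg.left i ⊗ₜ[k] (counit (R := k) (rg.right i) • (1 : H))) := by
      intro i _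
      rw [← (a₂ i).eq]
      rw [TensorProduct.tmul_sum, map_sum]
      have : ∀ j ∈ (a₂ i).index,
          F (rg.left i ⊗ₜ[k] ((a₂ i).left j ⊗ₜ[k] (a₂ i).right j))
            = comul (R := k) t *
                (rg.left i ⊗ₜ[k] ((a₂ i).left j * antipode (R := k) ((a₂ i).right j))) := by
        intro j _
        rw [hFapp, mul_assoc, Algebra.TensorProduct.tmul_mul_tmul, mul_one]
      rw [Finset.sum_congr rfl this, ← Finset.mul_sum, ← TensorProduct.tmul_sum,
        sum_mul_antipode_eq_smul (a₂ i)]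
    -- apply `F` to the coassociativity identity
    have hco := Coalgebra.sum_tmul_tmul_eq (R := k) rg a₁ a₂
    apply_fun F at hco
    rw [map_sum, map_sum] at hco
    -- the right-hand side of `hco` is `Δt * (g ⊗ 1)`
    have hRHS : ∑ i ∈ rg.index, F (∑ j ∈ (a₂ i).index,
          rg.left i ⊗ₜ[k] ((a₂ i).left j ⊗ₜ[k] (a₂ i).right j))
        = comul (R := k) t * (g ⊗ₜ[k] (1 : H)) := by
      rw [hcounitR, Finset.mul_sum]
      refine Finset.sum_congr rfl fun i hi => ?_
      rw [← TensorProduct.tmul_sum, (a₂ i).eq]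
      exact hFright i hi
    -- the left-hand side of `hco` is `Δt * (1 ⊗ S g)`
    have hLHS : ∑ i ∈ rg.index, F (∑ j ∈ (a₁ i).index,
          (a₁ i).left j ⊗ₜ[k] ((a₁ i).right j ⊗ₜ[k] rg.right i))
        = comul (R := k) t * ((1 : H) ⊗ₜ[k] antipode (R := k) g) := by
      have step : ∀ i ∈ rg.index,
          F (∑ j ∈ (a₁ i).index, (a₁ i).left j ⊗ₜ[k] ((a₁ i).right j ⊗ₜ[k] rg.right i))
            = counit (R := k) (rg.left i) •
                (comul (R := k) t * ((1 : H) ⊗ₜ[k] antipode (R := k) (rg.right i))) := by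
        intro i _
        rw [map_sum]
        have : ∀ j ∈ (a₁ i).index,
            F ((a₁ i).left j ⊗ₜ[k] ((a₁ i).right j ⊗ₜ[k] rg.right i))
              = (comul (R := k) t * ((a₁ i).left j ⊗ₜ[k] (a₁ i).right j)) *
                  ((1 : H) ⊗ₜ[k] antipode (R := k) (rg.right i)) := fun j _ => hFapp _ _ _
        rw [Finset.sum_congr rfl this, ← Finset.sum_mul, ← Finset.mul_sum, (a₁ i).eq,
          P1 (rg.left i), smul_mul_assoc]
      rw [Finset.sum_congr rfl step]
      have : ∀ i ∈ rg.index,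
          counit (R := k) (rg.left i) •
              (comul (R := k) t * ((1 : H) ⊗ₜ[k] antipode (R := k) (rg.right i)))
            = comul (R := k) t *
                ((1 : H) ⊗ₜ[k] antipode (R := k) (counit (R := k) (rg.left i) • rg.right i)) := by
        intro i _
        rw [map_smul, TensorProduct.tmul_smul, mul_smul_comm]
      rw [Finset.sum_congr rfl this, ← Finset.mul_sum, ← TensorProduct.tmul_sum, ← map_sum,
        hcounitL]
    rw [hRHS, hLHS] at hco
    exact hco.symm
  -- Now the main computation.
  intro h
  obtain ⟨g, rfl⟩ := hS.surjective h
  set f : H →ₗ[k] H := (antipode (R := k) (A := H)) ∘ₗ LinearMap.mulRight k g with hf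
  have key : (TensorProduct.map (antipode (R := k))
        (LinearMap.mulRight k (antipode (R := k) g))) (comul (R := k) t)
      = LinearMap.rTensor H f (comul (R := k) t) := by
    rw [← LinearMap.rTensor_comp_lTensor, LinearMap.comp_apply, ← E1, ← C g, E2,
      hf, LinearMap.rTensor_comp, LinearMap.comp_apply]
  rw [key]
  have comm : LinearMap.lTensor H α (LinearMap.rTensor H f (comul (R := k) t))
      = LinearMap.rTensor k f (LinearMap.lTensor H α (comul (R := k) t)) := by
    have h1 := LinearMap.congr_fun
      ((LinearMap.lTensor_comp_rTensor (f := f) (g := α)).trans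
        (LinearMap.rTensor_comp_lTensor (f := f) (g := α)).symm) (comul (R := k) t)
    simp only [LinearMap.comp_apply] at h1
    exact h1
  rw [comm]
  have nat : ∀ v : H ⊗[k] k,
      TensorProduct.rid k H (LinearMap.rTensor k f v) = f (TensorProduct.rid k H v) := by
    intro v
    induction v using TensorProduct.induction_on with
    | zero => simp
    | tmul x c => simp
    | add x y hx hy => simp [hx, hy]
  rw [nat, hα t, hαt, one_smul]
  simp [hf]
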